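/- Let Ω have N elements, fix k ≥ 1 with 2k-1 ≤ N, and fix g, h with N-g, N-h even, g,h ≥ 1. The expected value over the uniform probability on E(g,h,N) of the fraction of Ω occupied by points in symmetric (2k-1)-cycles of H∘G equals ((2k-1)/N) · N^{underline(2k-1)} · #E(g-1,h-1,N-2k+1)/#E(g,h,N), where N^{underline(m)} = N(N-1)···(N-m+1). -/

import Mathlib

open Filter

/-- The number of fixed points of a permutation of `Fin N`. -/
noncomputable def fixCard {N : ℕ} (σ : Equiv.Perm (Fin N)) : ℕ :=
  Nat.card {x : Fin N // σ x = x}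

/-- The set of ordered pairs `(G, H)` of involutions of an `N`-element set with exactly
`g` and `h` fixed points respectively. -/
def pairE (g h N : ℕ) : Set (Equiv.Perm (Fin N) × Equiv.Perm (Fin N)) :=
  {p | p.1 * p.1 = 1 ∧ p.2 * p.2 = 1 ∧ fixCard p.1 = g ∧ fixCard p.2 = h}

/-- The orbit (cycle) of a point `x` under a permutation `L`. -/
def orb {N : ℕ} (L : Equiv.Perm (Fin N)) (x : Fin N) : Set (Fin N) :=
  {y | ∃ n : ℕ, (L ^ n) x = y}

/-- The number of points of `Fin N` lying on symmetric (i.e. `G`-invariant) cycles of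
`L = H ∘ G` of length `t`. -/
noncomputable def symCount (N t : ℕ) (G H : Equiv.Perm (Fin N)) : ℕ :=
  Nat.card {x : Fin N |
    ⇑G '' orb (H * G) x = orb (H * G) x ∧ Nat.card (orb (H * G) x) = t}

namespace SymOdd

open Equiv Function Set

variable {N m : ℕ} [NeZero m]

/-- Fixed equivalence between the complement of the range of an embedding and `Fin (N - m)`. -/
noncomputable def ce (f : ZMod m ↪ Fin N) :
    ((Set.range ⇑f)ᶜ : Set (Fin N)) ≃ Fin (N - m) :=
  Finite.equivFinOfCardEq (by
    have h1 : Nat.card ((Set.range ⇑f) : Set (Fin N)) = m := by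
      rw [Nat.card_range_of_injective f.injective, Nat.card_zmod]
    have h2 := Set.ncard_add_ncard_compl (Set.range ⇑f) (Set.toFinite _) (Set.toFinite _)
    rw [Nat.card_coe_set_eq] at h1
    have h3 : Nat.card (Fin N) = N := by simp
    rw [Nat.card_coe_set_eq]
    omega)

/-- The underlying function of our permutation construction. -/
noncomputable def gfun (f : ZMod m ↪ Fin N) (a : Equiv.Perm (ZMod m))
    (q : Equiv.Perm (Fin (N - m))) (x : Fin N) : Fin N :=
  if hx : x ∈ Set.range ⇑f then f (a (Function.invFun ⇑f x))
  else ↑((ce f).symm (q (ce f ⟨x, hx⟩)))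

variable {f : ZMod m ↪ Fin N} {a b : Equiv.Perm (ZMod m)} {q r : Equiv.Perm (Fin (N - m))}

lemma gfun_apply_mem (j : ZMod m) : gfun f a q (f j) = f (a j) := by
  rw [gfun, dif_pos ⟨j, rfl⟩, Function.leftInverse_invFun f.injective j]

lemma gfun_apply_not_mem {x : Fin N} (hx : x ∉ Set.range ⇑f) :
    gfun f a q x = ↑((ce f).symm (q (ce f ⟨x, hx⟩))) := dif_neg hx

lemma gfun_not_mem {x : Fin N} (hx : x ∉ Set.range ⇑f) :
    gfun f a q x ∉ Set.range ⇑f := by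
  rw [gfun_apply_not_mem hx]
  exact ((ce f).symm (q (ce f ⟨x, hx⟩))).2

lemma gfun_gfun (x : Fin N) :
    gfun f a q (gfun f b r x) = gfun f (a * b) (q * r) x := by
  by_cases hx : x ∈ Set.range ⇑f
  · obtain ⟨j, rfl⟩ := hx
    rw [gfun_apply_mem, gfun_apply_mem, gfun_apply_mem, Equiv.Perm.mul_apply]
  · have hy := gfun_not_mem (f := f) (a := b) (q := r) hx
    rw [gfun_apply_not_mem (a := b) (q := r) hx] at hy ⊢
    rw [gfun_apply_not_mem hy, gfun_apply_not_mem hx]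
    congr 1
    rw [Subtype.coe_eta, Equiv.apply_symm_apply, Equiv.Perm.mul_apply]

lemma gfun_one (x : Fin N) : gfun f 1 1 x = x := by
  by_cases hx : x ∈ Set.range ⇑f
  · obtain ⟨j, rfl⟩ := hx
    rw [gfun_apply_mem]; rfl
  · rw [gfun_apply_not_mem hx]
    simp

/-- The permutation of `Fin N` acting as `a` (transported by `f`) on `range f` and as `q`
(transported by `ce f`) on the complement. -/
noncomputable def mkP (f : ZMod m ↪ Fin N) (a : Equiv.Perm (ZMod m))
    (q : Equiv.Perm (Fin (N - m))) : Equiv.Perm (Fin N) where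
  toFun := gfun f a q
  invFun := gfun f a⁻¹ q⁻¹
  left_inv x := by rw [gfun_gfun, inv_mul_cancel, inv_mul_cancel, gfun_one]
  right_inv x := by rw [gfun_gfun, mul_inv_cancel, mul_inv_cancel, gfun_one]

lemma mkP_apply_mem (j : ZMod m) : mkP f a q (f j) = f (a j) := gfun_apply_mem j

lemma mkP_apply_not_mem {x : Fin N} (hx : x ∉ Set.range ⇑f) :
    mkP f a q x = ↑((ce f).symm (q (ce f ⟨x, hx⟩))) := dif_neg hx

lemma mkP_mul : mkP f a q * mkP f b r = mkP f (a * b) (q * r) :=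
  Equiv.ext fun x => gfun_gfun x

lemma mkP_one : mkP f 1 1 = 1 := Equiv.ext fun x => gfun_one x

lemma mkP_inj_q (h : mkP f a q = mkP f a r) : q = r := by
  ext v
  have hy : (↑((ce f).symm v) : Fin N) ∉ Set.range ⇑f := ((ce f).symm v).2
  have h2 := DFunLike.congr_fun h (↑((ce f).symm v) : Fin N)
  rw [mkP_apply_not_mem hy, mkP_apply_not_mem hy] at h2
  have h3 := (ce f).symm.injective (Subtype.coe_injective h2)
  rw [Subtype.coe_eta, Equiv.apply_symm_apply] at h3
  rw [h3]


lemma fixCard_decomp (σ : Equiv.Perm (Fin N)) (S : Set (Fin N)) :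
    fixCard σ = Nat.card {y : S // σ ↑y = ↑y} + Nat.card {y : ↥Sᶜ // σ ↑y = ↑y} := by
  rw [fixCard, ← Nat.card_sum]
  apply Nat.card_congr
  refine Equiv.symm (Equiv.ofBijective
    (Sum.elim (fun z => ⟨↑z.1, z.2⟩) (fun z => ⟨↑z.1, z.2⟩)) ⟨?_, ?_⟩)
  · rintro (⟨⟨y, hy⟩, hfy⟩ | ⟨⟨y, hy⟩, hfy⟩) (⟨⟨y', hy'⟩, hfy'⟩ | ⟨⟨y', hy'⟩, hfy'⟩) hh <;>
      simp only [Sum.elim_inl, Sum.elim_inr, Subtype.mk.injEq] at hh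
    · subst hh; rfl
    · exact absurd (hh ▸ hy) hy'
    · exact absurd (hh ▸ hy) (by simpa using hy')
    · subst hh; rfl
  · rintro ⟨x, hx⟩
    by_cases hS : x ∈ S
    · exact ⟨Sum.inl ⟨⟨x, hS⟩, hx⟩, rfl⟩
    · exact ⟨Sum.inr ⟨⟨x, hS⟩, hx⟩, rfl⟩

lemma card_fix_range (σ : Equiv.Perm (Fin N)) (hσ : ∀ j, σ (f j) = f (a j)) :
    Nat.card {y : (Set.range ⇑f : Set (Fin N)) // σ ↑y = ↑y}
      = Nat.card {j : ZMod m // a j = j} := by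
  apply Nat.card_congr
  refine Equiv.symm (Equiv.subtypeEquiv (Equiv.ofInjective ⇑f f.injective) fun j => ?_)
  simp only [Equiv.ofInjective_apply, hσ]
  exact ⟨fun hj => congrArg f hj, fun hj => f.injective hj⟩

lemma card_fix_compl (σ : Equiv.Perm (Fin N))
    (hσ : ∀ x (hx : x ∉ Set.range ⇑f), σ x = ↑((ce f).symm (q (ce f ⟨x, hx⟩)))) :
    Nat.card {y : ↥(Set.range ⇑f)ᶜ // σ ↑y = ↑y}
      = Nat.card {v : Fin (N - m) // q v = v} := by
  apply Nat.card_congr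
  refine Equiv.subtypeEquiv (ce f) fun y => ?_
  rw [hσ ↑y y.2, Subtype.coe_eta]
  constructor
  · intro hy
    have := Subtype.coe_injective hy
    rw [Equiv.symm_apply_eq] at this
    exact this
  · intro hy
    rw [hy, Equiv.symm_apply_apply]

lemma fixCard_mkP :
    fixCard (mkP f a q)
      = Nat.card {j : ZMod m // a j = j} + Nat.card {v : Fin (N - m) // q v = v} := by
  rw [fixCard_decomp (mkP f a q) (Set.range ⇑f),
    card_fix_range (mkP f a q) (fun j => mkP_apply_mem j),
    card_fix_compl (mkP f a q) (fun x hx => mkP_apply_not_mem hx)]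

lemma nat_card_subtype_unique {α : Type*} {p : α → Prop} (a : α) (h : ∀ b, p b ↔ b = a) :
    Nat.card {b // p b} = 1 :=
  haveI : Unique {b // p b} :=
    { default := ⟨a, (h a).2 rfl⟩, uniq := fun b => Subtype.ext ((h _).1 b.2) }
  Nat.card_unique

section OddM
variable (hm : Odd m)
include hm

lemma isUnit_two : IsUnit (2 : ZMod m) := by
  have := (ZMod.isUnit_iff_coprime 2 m).2 (by simpa using hm)
  simpa using this

lemma eq_zero_of_neg_eq {j : ZMod m} (h : -j = j) : j = 0 := by
  have h2 : (2 : ZMod m) * j = 0 := by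
    rw [two_mul]
    nth_rewrite 1 [← h]
    exact neg_add_cancel j
  obtain ⟨u, hu⟩ := isUnit_two hm
  have : (↑u⁻¹ : ZMod m) * ((2 : ZMod m) * j) = (↑u⁻¹ : ZMod m) * 0 := by rw [h2]
  rwa [← mul_assoc, ← hu, Units.inv_mul, one_mul, mul_zero] at this

lemma card_fix_neg : Nat.card {j : ZMod m // -j = j} = 1 := by
  apply nat_card_subtype_unique (0 : ZMod m)
  intro b
  exact ⟨fun hb => eq_zero_of_neg_eq hm hb, fun hb => by rw [hb, neg_zero]⟩

lemma card_fix_oneSub : Nat.card {j : ZMod m // 1 - j = j} = 1 := by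
  obtain ⟨u, hu⟩ := isUnit_two hm
  apply nat_card_subtype_unique ((↑u⁻¹ : ZMod m))
  intro b
  constructor
  · intro hb
    have h2 : (2 : ZMod m) * b = 1 := by
      rw [two_mul]
      nth_rewrite 1 [← hb]
      rw [sub_add_cancel]
    calc b = ((↑u⁻¹ : ZMod m) * 2) * b := by rw [← hu, Units.inv_mul, one_mul]
    _ = (↑u⁻¹ : ZMod m) * ((2:ZMod m) * b) := by ring
    _ = (↑u⁻¹ : ZMod m) := by rw [h2, mul_one]
  · rintro rfl
    have h2 : (2 : ZMod m) * (↑u⁻¹ : ZMod m) = 1 := by rw [← hu, Units.mul_inv]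
    have := h2
    rw [two_mul] at this
    linear_combination -this

end OddM

/-- Negation as a permutation of `ZMod m`. -/
def negP : Equiv.Perm (ZMod m) := Equiv.neg (ZMod m)

/-- `j ↦ 1 - j` as a permutation of `ZMod m`. -/
def oneSubP : Equiv.Perm (ZMod m) :=
  ⟨fun j => 1 - j, fun j => 1 - j, fun j => sub_sub_cancel 1 j, fun j => sub_sub_cancel 1 j⟩

@[simp] lemma negP_apply (j : ZMod m) : (negP : Equiv.Perm (ZMod m)) j = -j := rfl
@[simp] lemma oneSubP_apply (j : ZMod m) : (oneSubP : Equiv.Perm (ZMod m)) j = 1 - j := rfl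

lemma negP_mul_negP : (negP : Equiv.Perm (ZMod m)) * negP = 1 := by
  ext j
  simp [Equiv.Perm.mul_apply]

lemma oneSubP_mul_oneSubP : (oneSubP : Equiv.Perm (ZMod m)) * oneSubP = 1 := by
  ext j
  simp [Equiv.Perm.mul_apply, sub_sub_cancel]

/-- The constructed first involution. -/
noncomputable def GG (f : ZMod m ↪ Fin N) (q : Equiv.Perm (Fin (N - m))) :
    Equiv.Perm (Fin N) := mkP f negP q

/-- The constructed second involution. -/
noncomputable def HH (f : ZMod m ↪ Fin N) (q : Equiv.Perm (Fin (N - m))) :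
    Equiv.Perm (Fin N) := mkP f oneSubP q

lemma GG_apply_mem (j : ZMod m) : GG f q (f j) = f (-j) := mkP_apply_mem j

lemma HH_apply_mem (j : ZMod m) : HH f q (f j) = f (1 - j) := mkP_apply_mem j

lemma HG_apply_mem (j : ZMod m) : (HH f r * GG f q) (f j) = f (1 + j) := by
  rw [Equiv.Perm.mul_apply, GG_apply_mem, HH_apply_mem, sub_neg_eq_add]

lemma HG_pow_apply (n : ℕ) (j : ZMod m) :
    ((HH f r * GG f q) ^ n) (f j) = f ((n : ZMod m) + j) := by
  induction n with
  | zero => simp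
  | succ n ih =>
    rw [pow_succ', Equiv.Perm.mul_apply, ih, HG_apply_mem]
    congr 1
    push_cast
    ring

lemma orb_HG (i : ZMod m) : orb (HH f r * GG f q) (f i) = Set.range ⇑f := by
  ext y
  constructor
  · rintro ⟨n, rfl⟩
    rw [HG_pow_apply]
    exact ⟨_, rfl⟩
  · rintro ⟨j, rfl⟩
    exact ⟨(j - i).val, by rw [HG_pow_apply, ZMod.natCast_zmod_val, sub_add_cancel]⟩

lemma card_range_emb (f : ZMod m ↪ Fin N) :
    Nat.card (Set.range ⇑f : Set (Fin N)) = m := by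
  rw [Nat.card_range_of_injective f.injective, Nat.card_zmod]

lemma GG_image : ⇑(GG f q) '' Set.range ⇑f = Set.range ⇑f := by
  ext y
  simp only [Set.mem_image, Set.mem_range]
  constructor
  · rintro ⟨_, ⟨j, rfl⟩, rfl⟩
    rw [GG_apply_mem]
    exact ⟨-j, rfl⟩
  · rintro ⟨j, rfl⟩
    exact ⟨f (-j), ⟨-j, rfl⟩, by rw [GG_apply_mem, neg_neg]⟩

lemma fixCard_GG (hm : Odd m) :
    fixCard (GG f q) = 1 + Nat.card {v : Fin (N - m) // q v = v} := by
  rw [GG, fixCard_mkP]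
  congr 1
  simpa using card_fix_neg hm

lemma fixCard_HH (hm : Odd m) :
    fixCard (HH f q) = 1 + Nat.card {v : Fin (N - m) // q v = v} := by
  rw [HH, fixCard_mkP]
  congr 1
  simpa using card_fix_oneSub hm

lemma fixCard_eq_card (σ : Equiv.Perm (Fin N)) :
    fixCard σ = Nat.card {v : Fin N // σ v = v} := rfl

/-- Structure theorem for an orbit of size `m`. -/
lemma orbit_structure {L : Equiv.Perm (Fin N)} {x : Fin N}
    (hcard : Nat.card (orb L x) = m) :
    ∃ φ : ZMod m → Fin N, Function.Injective φ ∧ φ 0 = x ∧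
      (∀ j, L (φ j) = φ (j + 1)) ∧ Set.range φ = orb L x := by
  have hpx : x ∈ Function.periodicPts ⇑L := by
    refine ⟨orderOf L, orderOf_pos L, ?_⟩
    show (⇑L)^[orderOf L] x = x
    rw [← Equiv.Perm.coe_pow, pow_orderOf_eq_one]
    rfl
  set n := Function.minimalPeriod ⇑L x with hn
  have hn0 : 0 < n := Function.minimalPeriod_pos_of_mem_periodicPts hpx
  have hmod : ∀ a : ℕ, (L ^ (a % n)) x = (L ^ a) x := by
    intro a
    rw [Equiv.Perm.coe_pow, Equiv.Perm.coe_pow]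
    exact Function.iterate_mod_minimalPeriod_eq
  have horb : orb L x = (fun a => (L ^ a) x) '' Set.Iio n := by
    ext y
    constructor
    · rintro ⟨a, rfl⟩
      exact ⟨a % n, Nat.mod_lt _ hn0, hmod a⟩
    · rintro ⟨a, _, rfl⟩
      exact ⟨a, rfl⟩
  have hinj : Set.InjOn (fun a => (L ^ a) x) (Set.Iio n) := by
    intro a ha b hb hab
    simp only [Equiv.Perm.coe_pow] at hab
    exact Function.iterate_injOn_Iio_minimalPeriod (f := ⇑L) (x := x) ha hb hab
  have hnm : n = m := by
    rw [Nat.card_coe_set_eq, horb, Set.ncard_image_of_injOn hinj, ← Finset.coe_range,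
      Set.ncard_coe_finset, Finset.card_range] at hcard
    exact hcard
  refine ⟨fun j : ZMod m => (L ^ j.val) x, ?_, ?_, ?_, ?_⟩
  · intro j j' hjj
    have h1 : j.val < n := hnm ▸ ZMod.val_lt j
    have h2 : j'.val < n := hnm ▸ ZMod.val_lt j'
    have := hinj h1 h2 hjj
    rw [← ZMod.natCast_zmod_val j, ← ZMod.natCast_zmod_val j', this]
  · show (L ^ (0 : ZMod m).val) x = x
    rw [ZMod.val_zero, pow_zero]
    rfl
  · intro j
    show L ((L ^ j.val) x) = (L ^ (j + 1).val) x
    have h1 : L ((L ^ j.val) x) = (L ^ (j.val + 1)) x := by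
      rw [pow_succ', Equiv.Perm.mul_apply]
    have h2 : (j + 1).val = (j.val + 1) % m := by
      rw [← ZMod.val_natCast]
      congr 1
      push_cast
      rw [ZMod.natCast_zmod_val]
    calc L ((L ^ j.val) x) = (L ^ (j.val + 1)) x := h1
    _ = (L ^ ((j.val + 1) % n)) x := (hmod _).symm
    _ = (L ^ ((j + 1).val)) x := by
        congr 2
        rw [hnm]
        exact h2.symm
  · ext y
    constructor
    · rintro ⟨j, rfl⟩
      exact ⟨j.val, rfl⟩
    · rintro ⟨a, rfl⟩
      refine ⟨(a : ZMod m), ?_⟩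
      show (L ^ ((a : ZMod m)).val) x = (L ^ a) x
      rw [ZMod.val_natCast, ← hnm]
      exact hmod a

variable (g h : ℕ)

lemma mem_pairE_mk (hm : Odd m) (hg : 1 ≤ g) (hh : 1 ≤ h)
    (f : ZMod m ↪ Fin N) (q1 q2 : Equiv.Perm (Fin (N - m)))
    (hq : (q1, q2) ∈ pairE (g - 1) (h - 1) (N - m)) :
    (GG f q1, HH f q2) ∈ pairE g h N := by
  obtain ⟨hq1, hq2, hqg, hqh⟩ := hq
  refine ⟨?_, ?_, ?_, ?_⟩
  · show GG f q1 * GG f q1 = 1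
    rw [GG, mkP_mul, negP_mul_negP, hq1, mkP_one]
  · show HH f q2 * HH f q2 = 1
    rw [HH, mkP_mul, oneSubP_mul_oneSubP, hq2, mkP_one]
  · show fixCard (GG f q1) = g
    rw [fixCard_GG hm]
    have : Nat.card {v : Fin (N - m) // q1 v = v} = g - 1 := hqg
    omega
  · show fixCard (HH f q2) = h
    rw [fixCard_HH hm]
    have : Nat.card {v : Fin (N - m) // q2 v = v} = h - 1 := hqh
    omega

/-- The main bijection, from marked data to triples. -/
noncomputable def Phi (hm : Odd m) (hg : 1 ≤ g) (hh : 1 ≤ h)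
    (u : ZMod m × (ZMod m ↪ Fin N) × ↥(pairE (g - 1) (h - 1) (N - m))) :
    {pz : (Equiv.Perm (Fin N) × Equiv.Perm (Fin N)) × Fin N //
      pz.1 ∈ pairE g h N ∧
      ⇑pz.1.1 '' orb (pz.1.2 * pz.1.1) pz.2 = orb (pz.1.2 * pz.1.1) pz.2 ∧
      Nat.card (orb (pz.1.2 * pz.1.1) pz.2) = m} :=
  ⟨((GG u.2.1 u.2.2.1.1, HH u.2.1 u.2.2.1.2), u.2.1 u.1), by
    refine ⟨mem_pairE_mk g h hm hg hh u.2.1 u.2.2.1.1 u.2.2.1.2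
      (by rw [Prod.mk.eta]; exact u.2.2.2), ?_, ?_⟩
    · rw [orb_HG, GG_image]
    · rw [orb_HG, card_range_emb]⟩

lemma Phi_injective (hm : Odd m) (hg : 1 ≤ g) (hh : 1 ≤ h) :
    Function.Injective (Phi (N := N) (m := m) g h hm hg hh) := by
  rintro ⟨i, f, ⟨⟨q1, q2⟩, hq⟩⟩ ⟨i', f', ⟨⟨q1', q2'⟩, hq'⟩⟩ huv
  have hG : GG f q1 = GG f' q1' := congrArg (fun z => z.1.1.1) huv
  have hH : HH f q2 = HH f' q2' := congrArg (fun z => z.1.1.2) huv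
  have hx : f i = f' i' := congrArg (fun z => z.1.2) huv
  have hrange : Set.range ⇑f = Set.range ⇑f' := by
    rw [← orb_HG (f := f) (q := q1) (r := q2) i,
      ← orb_HG (f := f') (q := q1') (r := q2') i', hG, hH, hx]
  have hf0 : f' 0 = f 0 := by
    have hmem : f' 0 ∈ Set.range ⇑f := by
      rw [hrange]; exact ⟨0, rfl⟩
    obtain ⟨j0, hj0⟩ := hmem
    have e1 : GG f q1 (f j0) = f j0 := by
      rw [hj0, hG, GG_apply_mem, neg_zero]
    rw [GG_apply_mem] at e1
    have hj00 : j0 = 0 := eq_zero_of_neg_eq hm (f.injective e1)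
    rw [← hj0, hj00]
  have hfn : ∀ n : ℕ, f (n : ZMod m) = f' (n : ZMod m) := by
    intro n
    induction n with
    | zero => simpa using hf0.symm
    | succ n ih =>
      have e1 : f (((n + 1 : ℕ) : ZMod m)) = (HH f q2 * GG f q1) (f (n : ZMod m)) := by
        rw [HG_apply_mem]
        congr 1
        push_cast
        ring
      have e2 : f' (((n + 1 : ℕ) : ZMod m)) = (HH f' q2' * GG f' q1') (f' (n : ZMod m)) := by
        rw [HG_apply_mem]
        congr 1
        push_cast
        ring
      rw [e1, e2, ← hG, ← hH, ih]
  have hff : f = f' := by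
    apply DFunLike.ext
    intro j
    have := hfn j.val
    rwa [ZMod.natCast_zmod_val] at this
  subst hff
  have hii : i = i' := f.injective hx
  subst hii
  have hq1 : q1 = q1' := mkP_inj_q hG
  have hq2 : q2 = q2' := mkP_inj_q hH
  subst hq1
  subst hq2
  rfl

lemma Phi_surjective (hm : Odd m) (hg : 1 ≤ g) (hh : 1 ≤ h) :
    Function.Surjective (Phi (N := N) (m := m) g h hm hg hh) := by
  rintro ⟨⟨⟨G, H⟩, x⟩, ⟨⟨hG2, hH2, hfg, hfh⟩, himg, hcard⟩⟩
  simp only at hG2 hH2 hfg hfh himg hcard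
  set L := H * G with hL
  obtain ⟨φ, hφinj, hφ0, hφstep, hφrange⟩ := orbit_structure (L := L) (x := x) hcard
  have hGinv : ∀ y, G (G y) = y := fun y => by
    have := DFunLike.congr_fun hG2 y
    simpa [Equiv.Perm.mul_apply] using this
  have hHinv : ∀ y, H (H y) = y := fun y => by
    have := DFunLike.congr_fun hH2 y
    simpa [Equiv.Perm.mul_apply] using this
  have hGi : G⁻¹ = G := inv_eq_of_mul_eq_one_left hG2
  have hHi : H⁻¹ = H := inv_eq_of_mul_eq_one_left hH2
  have hGL : ∀ y, G (L y) = L⁻¹ (G y) := by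
    intro y
    rw [hL, mul_inv_rev, hGi, hHi]
    simp [Equiv.Perm.mul_apply]
  have hφpow : ∀ (a : ℕ) (j : ZMod m), (L ^ a) (φ j) = φ (j + a) := by
    intro a
    induction a with
    | zero => intro j; simp
    | succ a ih =>
      intro j
      rw [pow_succ', Equiv.Perm.mul_apply, ih, hφstep]
      congr 1
      push_cast
      ring
  have hφval : ∀ j : ZMod m, φ j = (L ^ j.val) x := by
    intro j
    rw [← hφ0, hφpow]
    congr 1
    rw [zero_add, ZMod.natCast_zmod_val]
  have hLinv_phi : ∀ j, L⁻¹ (φ j) = φ (j - 1) := by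
    intro j
    have := hφstep (j - 1)
    rw [sub_add_cancel] at this
    rw [← this]
    exact L.symm_apply_apply _
  have hLinvpow : ∀ (a : ℕ) (j : ZMod m), (L⁻¹ ^ a) (φ j) = φ (j - a) := by
    intro a
    induction a with
    | zero => intro j; simp
    | succ a ih =>
      intro j
      rw [pow_succ', Equiv.Perm.mul_apply, ih, hLinv_phi]
      congr 1
      push_cast
      ring
  have hx_orb : x ∈ orb L x := ⟨0, by simp⟩
  have hGx_mem : G x ∈ Set.range φ := by
    rw [hφrange, ← himg]
    exact ⟨x, hx_orb, rfl⟩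
  obtain ⟨c, hc⟩ := hGx_mem
  have hGind : ∀ a : ℕ, G ((L ^ a) x) = (L⁻¹ ^ a) (G x) := by
    intro a
    induction a with
    | zero => simp
    | succ a ih =>
      simp only [pow_succ', Equiv.Perm.mul_apply]
      rw [hGL, ih]
  have hGφ : ∀ j, G (φ j) = φ (c - j) := by
    intro j
    rw [hφval j, hGind j.val, ← hc, hLinvpow]
    congr 1
    rw [ZMod.natCast_zmod_val]
  obtain ⟨u, hu⟩ := isUnit_two hm
  set j0 : ZMod m := (↑u⁻¹ : ZMod m) * c with hj0def
  have h2u : (2 : ZMod m) * (↑u⁻¹ : ZMod m) = 1 := by rw [← hu, Units.mul_inv]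
  have h2j0 : j0 + j0 = c := by
    have : ((2 : ZMod m) * (↑u⁻¹ : ZMod m)) * c = c := by rw [h2u, one_mul]
    calc j0 + j0 = ((2 : ZMod m) * (↑u⁻¹ : ZMod m)) * c := by rw [hj0def]; ring
    _ = c := this
  set fz : ZMod m ↪ Fin N := ⟨fun j => φ (j0 + j), fun j j' hj => add_left_cancel (hφinj hj)⟩
    with hfzdef
  have hfz_apply : ∀ j, fz j = φ (j0 + j) := fun j => rfl
  have hfzrange : Set.range ⇑fz = Set.range φ := by
    ext y
    constructor
    · rintro ⟨j, rfl⟩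
      exact ⟨j0 + j, rfl⟩
    · rintro ⟨j, rfl⟩
      exact ⟨j - j0, by rw [hfz_apply, add_sub_cancel]⟩
  have horbr : orb L x = Set.range ⇑fz := by rw [hfzrange, hφrange]
  have hGfz : ∀ j, G (fz j) = fz (-j) := by
    intro j
    rw [hfz_apply, hfz_apply, hGφ]
    congr 1
    linear_combination -h2j0
  have hHy : ∀ y, H y = L (G y) := by
    intro y
    rw [hL]
    simp only [Equiv.Perm.mul_apply]
    rw [hGinv]
  have hHfz : ∀ j, H (fz j) = fz (1 - j) := by
    intro j
    rw [hHy, hGfz, hfz_apply, hfz_apply, hφstep]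
    congr 1
    ring
  have hGmem : ∀ y : Fin N, y ∈ Set.range ⇑fz ↔ G y ∈ Set.range ⇑fz := by
    intro y
    constructor
    · rintro ⟨j, rfl⟩
      rw [hGfz]
      exact ⟨-j, rfl⟩
    · rintro ⟨j, hj⟩
      exact ⟨-j, by rw [← hGfz, hj, hGinv]⟩
  have hHmem : ∀ y : Fin N, y ∈ Set.range ⇑fz ↔ H y ∈ Set.range ⇑fz := by
    intro y
    constructor
    · rintro ⟨j, rfl⟩
      rw [hHfz]
      exact ⟨1 - j, rfl⟩
    · rintro ⟨j, hj⟩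
      refine ⟨1 - j, ?_⟩
      rw [← hHfz, hj, hHinv]
  have hGpred : ∀ y : Fin N, y ∈ (Set.range ⇑fz)ᶜ ↔ G y ∈ (Set.range ⇑fz)ᶜ := by
    intro y
    simp only [Set.mem_compl_iff]
    exact not_congr (hGmem y)
  have hHpred : ∀ y : Fin N, y ∈ (Set.range ⇑fz)ᶜ ↔ H y ∈ (Set.range ⇑fz)ᶜ := by
    intro y
    simp only [Set.mem_compl_iff]
    exact not_congr (hHmem y)
  set q1 : Equiv.Perm (Fin (N - m)) := (ce fz).permCongr (G.subtypePerm fun y => (hGpred y).symm) with hq1def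
  set q2 : Equiv.Perm (Fin (N - m)) := (ce fz).permCongr (H.subtypePerm fun y => (hHpred y).symm) with hq2def
  have hq1apply : ∀ (y : Fin N) (hy : y ∉ Set.range ⇑fz),
      G y = ↑((ce fz).symm (q1 (ce fz ⟨y, hy⟩))) := by
    intro y hy
    rw [hq1def, Equiv.permCongr_apply, Equiv.symm_apply_apply, Equiv.symm_apply_apply]
    rfl
  have hq2apply : ∀ (y : Fin N) (hy : y ∉ Set.range ⇑fz),
      H y = ↑((ce fz).symm (q2 (ce fz ⟨y, hy⟩))) := by
    intro y hy
    rw [hq2def, Equiv.permCongr_apply, Equiv.symm_apply_apply, Equiv.symm_apply_apply]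
    rfl
  have hGeq : G = GG fz q1 := by
    apply Equiv.ext
    intro y
    by_cases hy : y ∈ Set.range ⇑fz
    · obtain ⟨j, rfl⟩ := hy
      rw [GG_apply_mem, hGfz]
    · rw [GG, mkP_apply_not_mem hy, ← hq1apply y hy]
  have hHeq : H = HH fz q2 := by
    apply Equiv.ext
    intro y
    by_cases hy : y ∈ Set.range ⇑fz
    · obtain ⟨j, rfl⟩ := hy
      rw [HH_apply_mem, hHfz]
    · rw [HH, mkP_apply_not_mem hy, ← hq2apply y hy]
  have hq1sq : q1 * q1 = 1 := by
    have := hG2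
    rw [hGeq, GG, mkP_mul, negP_mul_negP, ← mkP_one (f := fz)] at this
    exact mkP_inj_q this
  have hq2sq : q2 * q2 = 1 := by
    have := hH2
    rw [hHeq, HH, mkP_mul, oneSubP_mul_oneSubP, ← mkP_one (f := fz)] at this
    exact mkP_inj_q this
  have hq1fix : fixCard q1 = g - 1 := by
    have := hfg
    rw [hGeq, fixCard_GG hm] at this
    have h2 : Nat.card {v : Fin (N - m) // q1 v = v} = fixCard q1 := rfl
    omega
  have hq2fix : fixCard q2 = h - 1 := by
    have := hfh
    rw [hHeq, fixCard_HH hm] at this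
    have h2 : Nat.card {v : Fin (N - m) // q2 v = v} = fixCard q2 := rfl
    omega
  refine ⟨⟨-j0, fz, ⟨(q1, q2), hq1sq, hq2sq, hq1fix, hq2fix⟩⟩, ?_⟩
  apply Subtype.ext
  show ((GG fz q1, HH fz q2), fz (-j0)) = ((G, H), x)
  have hfzx : fz (-j0) = x := by
    rw [hfz_apply, add_neg_cancel, hφ0]
  rw [← hGeq, ← hHeq, hfzx]

theorem key_count (hm : Odd m) (hg : 1 ≤ g) (hh : 1 ≤ h) :
    Nat.card {pz : (Equiv.Perm (Fin N) × Equiv.Perm (Fin N)) × Fin N //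
        pz.1 ∈ pairE g h N ∧
        ⇑pz.1.1 '' orb (pz.1.2 * pz.1.1) pz.2 = orb (pz.1.2 * pz.1.1) pz.2 ∧
        Nat.card (orb (pz.1.2 * pz.1.1) pz.2) = m}
      = m * N.descFactorial m * Nat.card (pairE (g - 1) (h - 1) (N - m)) := by
  have hbij : Function.Bijective (Phi (N := N) (m := m) g h hm hg hh) :=
    ⟨Phi_injective g h hm hg hh, Phi_surjective g h hm hg hh⟩
  rw [← Nat.card_eq_of_bijective _ hbij]
  rw [Nat.card_prod, Nat.card_prod, Nat.card_zmod, Nat.card_eq_fintype_card (α := ZMod m ↪ Fin N),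
    Fintype.card_embedding_eq, ZMod.card, Fintype.card_fin, mul_assoc]

theorem sum_symCount (hm : Odd m) (hg : 1 ≤ g) (hh : 1 ≤ h) :
    ∑ p ∈ (Set.toFinite (pairE g h N)).toFinset, symCount N m p.1 p.2
      = m * N.descFactorial m * Nat.card (pairE (g - 1) (h - 1) (N - m)) := by
  classical
  rw [← key_count g h hm hg hh]
  have E1 : {pz : (Equiv.Perm (Fin N) × Equiv.Perm (Fin N)) × Fin N //
        pz.1 ∈ pairE g h N ∧
        ⇑pz.1.1 '' orb (pz.1.2 * pz.1.1) pz.2 = orb (pz.1.2 * pz.1.1) pz.2 ∧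
        Nat.card (orb (pz.1.2 * pz.1.1) pz.2) = m}
      ≃ Σ p : (pairE g h N),
          {x : Fin N // ⇑p.1.1 '' orb (p.1.2 * p.1.1) x = orb (p.1.2 * p.1.1) x ∧
            Nat.card (orb (p.1.2 * p.1.1) x) = m} :=
    { toFun := fun z => ⟨⟨z.1.1, z.2.1⟩, ⟨z.1.2, z.2.2⟩⟩
      invFun := fun w => ⟨(w.1.1, w.2.1), w.1.2, w.2.2⟩
      left_inv := fun z => rfl
      right_inv := fun w => rfl }
  rw [Nat.card_congr E1, Nat.card_eq_fintype_card, Fintype.card_sigma]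
  rw [← Finset.sum_coe_sort ((Set.toFinite (pairE g h N)).toFinset)]
  apply Fintype.sum_equiv (Equiv.subtypeEquivRight
    (fun p => ((Set.toFinite (pairE g h N)).mem_toFinset)))
  intro p
  rw [symCount]
  rw [Nat.card_eq_fintype_card]
  apply Fintype.card_congr
  exact Equiv.subtypeEquivRight (fun x => Iff.rfl)

end SymOdd

/-- The expected fraction of the space occupied by symmetric `(2k-1)`-cycles of `H ∘ G`
equals `((2k-1)/N)·N^{underline(2k-1)}·#E(g-1,h-1,N-2k+1)/#E(g,h,N)`. -/
theorem expected_symmetric_odd_fraction (N k g h : ℕ)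
    (hk : 1 ≤ k) (hkN : 2 * k - 1 ≤ N)
    (hg : 1 ≤ g) (hh : 1 ≤ h)
    (heg : Even (N - g)) (heh : Even (N - h)) :
    (∑ᶠ p ∈ pairE g h N, (symCount N (2 * k - 1) p.1 p.2 : ℝ) / N) /
        (Nat.card (pairE g h N) : ℝ) =
      ((2 * k - 1 : ℝ) / N) * (N.descFactorial (2 * k - 1) : ℝ) *
        (Nat.card (pairE (g - 1) (h - 1) (N - (2 * k - 1))) : ℝ) /
          (Nat.card (pairE g h N) : ℝ) := by
  set m := 2 * k - 1 with hmdef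
  haveI : NeZero m := ⟨by omega⟩
  have hmodd : Odd m := ⟨k - 1, by omega⟩
  have hN0 : (N : ℝ) ≠ 0 := Nat.cast_ne_zero.2 (by omega)
  suffices hnum : (∑ᶠ p ∈ pairE g h N, (symCount N m p.1 p.2 : ℝ) / N)
      = ((2 * k - 1 : ℝ) / N) * (N.descFactorial m : ℝ) *
        (Nat.card (pairE (g - 1) (h - 1) (N - m)) : ℝ) by
    rw [hnum]
  have hfin : (pairE g h N).Finite := Set.toFinite _
  rw [← Set.Finite.coe_toFinset hfin, finsum_mem_coe_finset, ← Finset.sum_div,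
    ← Nat.cast_sum]
  have hsum := SymOdd.sum_symCount (N := N) (m := m) g h hmodd hg hh
  rw [hsum]
  have hcast : ((2 * k - 1 : ℕ) : ℝ) = 2 * (k : ℝ) - 1 := by
    rw [Nat.cast_sub (by omega : 1 ≤ 2 * k)]
    push_cast
    ring
  rw [← hmdef] at hcast
  push_cast [hcast]
  field_simp
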